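/- With E_7 ⊂ Pic_7 as above, the set {α_{ij} : 1 ≤ i < j ≤ 7} ∪ {β_i : 1 ≤ i ≤ 7} of 28 positive roots, together with their negatives, forms a root subsystem of E_7 of type A_7. -/
import Mathlib

def picDot {n : ℕ} (v w : Fin (n + 1) → ℤ) : ℤ :=
  v 0 * w 0 - ∑ i : Fin n, v i.succ * w i.succ

def picH (n : ℕ) : Fin (n + 1) → ℤ := fun j => if j = 0 then 1 else 0

def picE (n : ℕ) (i : Fin n) : Fin (n + 1) → ℤ := fun j => if j = i.succ then 1 else 0

def K7 : Fin 8 → ℤ := (-3 : ℤ) • picH 7 + ∑ i : Fin 7, picE 7 i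

def A7inE7 : Set (Fin 8 → ℤ) :=
  {α | (∃ i j : Fin 7, i ≠ j ∧ α = picE 7 i - picE 7 j) ∨
       (∃ i : Fin 7, α = (2 : ℤ) • picH 7 - ∑ j ∈ Finset.univ.erase i, picE 7 j) ∨
       (∃ i : Fin 7, α = -((2 : ℤ) • picH 7 - ∑ j ∈ Finset.univ.erase i, picE 7 j))}

def stdVec (i : Fin 8) : Fin 8 → ℤ := fun j => if j = i then 1 else 0

def dotZ (v w : Fin 8 → ℤ) : ℤ := ∑ i, v i * w i

def A7std : Set (Fin 8 → ℤ) :=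
  {v | ∃ i j : Fin 8, i ≠ j ∧ v = stdVec i - stdVec j}

/-- Closed form for the root indexed by `(i,j)`. -/
def Rfast (i j : Fin 8) : Fin 8 → ℤ := fun k =>
  if k = 0 then 2 * ((if j = 7 then 1 else 0) - (if i = 7 then 1 else 0))
  else ((if (k : ℕ) = (i : ℕ) + 1 then 1 else 0) - (if (k : ℕ) = (j : ℕ) + 1 then 1 else 0)
        + (if i = 7 then 1 else 0) - (if j = 7 then 1 else 0))

lemma eq1 : ∀ i j : Fin 7, picE 7 i - picE 7 j = Rfast i.castSucc j.castSucc := by decide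

lemma eq2 : ∀ i : Fin 7,
    ((2 : ℤ) • picH 7 - ∑ j ∈ Finset.univ.erase i, picE 7 j) = Rfast i.castSucc 7 := by decide

lemma eq3 : ∀ i : Fin 7,
    (-((2 : ℤ) • picH 7 - ∑ j ∈ Finset.univ.erase i, picE 7 j)) = Rfast 7 i.castSucc := by
  decide

lemma cast7 {i : Fin 8} (h : i ≠ 7) : ∃ i' : Fin 7, i'.castSucc = i := by
  have h1 : (i : ℕ) < 8 := i.isLt
  have h2 : (i : ℕ) ≠ 7 := by
    intro hh
    exact h (Fin.ext (hh.trans (by decide)))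
  exact ⟨⟨(i : ℕ), by omega⟩, Fin.ext rfl⟩

lemma cs_ne7 (i : Fin 7) : i.castSucc ≠ (7 : Fin 8) := by
  simp [Fin.ext_iff]; omega

lemma memChar (v : Fin 8 → ℤ) :
    v ∈ A7inE7 ↔ ∃ p : Fin 8 × Fin 8, p.1 ≠ p.2 ∧ v = Rfast p.1 p.2 := by
  constructor
  · rintro (⟨i, j, h, rfl⟩ | ⟨i, rfl⟩ | ⟨i, rfl⟩)
    · exact ⟨(i.castSucc, j.castSucc),
        fun hh => h (Fin.castSucc_injective _ hh), eq1 i j⟩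
    · exact ⟨(i.castSucc, 7), cs_ne7 i, eq2 i⟩
    · exact ⟨(7, i.castSucc), (cs_ne7 i).symm, eq3 i⟩
  · rintro ⟨p, h, rfl⟩
    obtain ⟨i, j⟩ := p
    by_cases hj : j = 7
    · subst hj
      obtain ⟨i', rfl⟩ := cast7 h
      exact Or.inr (Or.inl ⟨i', (eq2 i').symm⟩)
    · by_cases hi : i = 7
      · subst hi
        obtain ⟨j', rfl⟩ := cast7 hj
        exact Or.inr (Or.inr ⟨j', (eq3 j').symm⟩)
      · obtain ⟨i', rfl⟩ := cast7 hi
        obtain ⟨j', rfl⟩ := cast7 hj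
        exact Or.inl ⟨i', j', fun hh => h (by simp [hh]), (eq1 i' j').symm⟩

set_option maxRecDepth 100000 in
lemma decP1 : ∀ i j : Fin 8, i ≠ j →
    picDot (Rfast i j) K7 = 0 ∧ picDot (Rfast i j) (Rfast i j) = -2 := by decide

set_option maxRecDepth 100000 in
set_option maxHeartbeats 2000000 in
lemma decRefl : ∀ i j k l : Fin 8, i ≠ j → k ≠ l →
    Rfast k l + picDot (Rfast i j) (Rfast k l) • Rfast i j
      = Rfast (Equiv.swap i j k) (Equiv.swap i j l) := by decide

def Pairs : Finset (Fin 8 × Fin 8) := Finset.univ.filter (fun p => p.1 ≠ p.2)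

lemma setEq : A7inE7 = ↑(Pairs.image (fun p => Rfast p.1 p.2)) := by
  ext v
  rw [memChar v]
  simp only [Finset.coe_image, Set.mem_image, Finset.mem_coe, Pairs, Finset.mem_filter,
    Finset.mem_univ, true_and]
  constructor
  · rintro ⟨p, h, rfl⟩; exact ⟨p, h, rfl⟩
  · rintro ⟨p, h, rfl⟩; exact ⟨p, h, rfl⟩

set_option maxRecDepth 1000000 in
set_option maxHeartbeats 2000000 in
lemma decCard : (Pairs.image (fun p => Rfast p.1 p.2)).card = 56 := by decide

def fA7 (v : Fin 8 → ℤ) : Fin 8 → ℤ := fun k =>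
  if h : (k : ℕ) < 7 then v 0 / 2 + v ⟨(k : ℕ) + 1, by omega⟩ else -(v 0 / 2)

set_option maxRecDepth 100000 in
lemma decF : ∀ i j : Fin 8, i ≠ j → fA7 (Rfast i j) = stdVec i - stdVec j := by decide

set_option maxRecDepth 100000 in
set_option maxHeartbeats 2000000 in
lemma decStdInj : ∀ i j k l : Fin 8, i ≠ j → k ≠ l →
    stdVec i - stdVec j = stdVec k - stdVec l → i = k ∧ j = l := by decide

set_option maxRecDepth 100000 in
set_option maxHeartbeats 2000000 in
lemma decForm : ∀ i j k l : Fin 8, i ≠ j → k ≠ l →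
    dotZ (stdVec i - stdVec j) (stdVec k - stdVec l) = -picDot (Rfast i j) (Rfast k l) := by
  decide

/-- The 28 positive roots `α_{ij}` (`i<j`) and `βᵢ`, together with their negatives, form a
root subsystem of `E₇ ⊂ Pic₇` of type `A₇`: all 56 vectors are roots of `E₇`, the set is
closed under the reflections `s_α(x) = x + (α,x)α`, and there is a bijection onto the
roots of `A₇` carrying the intersection form to minus the standard form. -/
theorem A7_subsystem_of_E7 :
    (∀ α ∈ A7inE7, picDot α K7 = 0 ∧ picDot α α = -2) ∧
    (∀ α ∈ A7inE7, ∀ x ∈ A7inE7, x + picDot α x • α ∈ A7inE7) ∧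
    A7inE7.ncard = 56 ∧
    (∃ f : (Fin 8 → ℤ) → (Fin 8 → ℤ),
      Set.BijOn f A7inE7 A7std ∧
      ∀ α ∈ A7inE7, ∀ β ∈ A7inE7, dotZ (f α) (f β) = -picDot α β) := by
  refine ⟨?_, ?_, ?_, fA7, ⟨?_, ?_, ?_⟩, ?_⟩
  · intro α hα
    obtain ⟨p, h, rfl⟩ := (memChar α).mp hα
    obtain ⟨i, j⟩ := p
    exact decP1 i j h
  · intro α hα x hx
    obtain ⟨p, h, rfl⟩ := (memChar α).mp hα
    obtain ⟨i, j⟩ := p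
    obtain ⟨q, h', rfl⟩ := (memChar x).mp hx
    obtain ⟨k, l⟩ := q
    rw [memChar]
    exact ⟨(Equiv.swap i j k, Equiv.swap i j l),
      fun hh => h' ((Equiv.swap i j).injective hh), decRefl i j k l h h'⟩
  · rw [setEq, Set.ncard_coe_finset, decCard]
  · intro α hα
    obtain ⟨p, h, rfl⟩ := (memChar α).mp hα
    obtain ⟨i, j⟩ := p
    exact ⟨i, j, h, decF i j h⟩
  · intro α hα β hβ hfe
    obtain ⟨p, h, rfl⟩ := (memChar α).mp hα
    obtain ⟨i, j⟩ := p
    obtain ⟨q, h', rfl⟩ := (memChar β).mp hβ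
    obtain ⟨k, l⟩ := q
    rw [decF i j h, decF k l h'] at hfe
    obtain ⟨rfl, rfl⟩ := decStdInj i j k l h h' hfe
    rfl
  · rintro v ⟨i, j, h, rfl⟩
    exact ⟨Rfast i j, (memChar _).mpr ⟨(i, j), h, rfl⟩, decF i j h⟩
  · intro α hα β hβ
    obtain ⟨p, h, rfl⟩ := (memChar α).mp hα
    obtain ⟨i, j⟩ := p
    obtain ⟨q, h', rfl⟩ := (memChar β).mp hβ
    obtain ⟨k, l⟩ := q
    rw [decF i j h, decF k l h']
    exact decForm i j k l h h'
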